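/- Let δ > 0 and let (H_n) be a decreasing sequence (H_{n+1} ⊆ H_n) of nonempty compact subsets of ℝ with H = ⋂_{n=1}^∞ H_n. Then Avg(S(H_n, δ)) → Avg(S(H, δ)) as n → ∞, where S(A, δ) = ⋃_{x ∈ A} S(x, δ) is the open δ-neighbourhood (thickening) of A. -/

import Mathlib

open MeasureTheory Filter

/-- The mean `Avg` by Lebesgue measure. -/
noncomputable def avg (H : Set ℝ) : ℝ := (∫ x in H, x) / (volume H).toReal

/-- A uniformly separated set of reals is countable. -/
lemma countable_of_separated {S : Set ℝ} {ε : ℝ} (hε : 0 < ε)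
    (h : ∀ y ∈ S, ∀ z ∈ S, y ≠ z → ε ≤ |y - z|) : S.Countable := by
  have hq : ∀ y : ℝ, ∃ q : ℚ, y - ε / 2 < (q : ℝ) ∧ (q : ℝ) < y + ε / 2 := fun y =>
    exists_rat_btwn (by linarith)
  choose f hf1 hf2 using hq
  refine (Set.mapsTo_image f S).countable_of_injOn ?_ (Set.to_countable _)
  intro y hy z hz hyz
  by_contra hne
  have hsep := h y hy z hz hne
  have h1 := hf1 y; have h2 := hf2 y; have h3 := hf1 z; have h4 := hf2 z
  rw [hyz] at h1 h2
  have : |y - z| < ε := abs_sub_lt_iff.2 ⟨by linarith, by linarith⟩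
  linarith

/-- For a compact set in ℝ, the closed thickening minus the open thickening is null. -/
lemma volume_cthickening_diff_thickening (δ : ℝ) (hδ : 0 < δ) (H : Set ℝ)
    (hc : IsCompact H) :
    volume (Metric.cthickening δ H \ Metric.thickening δ H) = 0 := by
  rcases H.eq_empty_or_nonempty with rfl | hne
  · simp
  set D := Metric.cthickening δ H \ Metric.thickening δ H with hD
  have hct : Metric.cthickening δ H = ⋃ x ∈ H, Metric.closedBall x δ :=
    hc.isClosed.cthickening_eq_biUnion_closedBall hδ.le
  have key : ∀ y ∈ D, (∀ z ∈ H, δ ≤ dist y z) ∧ (y - δ ∈ H ∨ y + δ ∈ H) := by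
    intro y hy
    have hfar : ∀ z ∈ H, δ ≤ dist y z := by
      intro z hz
      by_contra hlt
      push_neg at hlt
      exact hy.2 (Metric.mem_thickening_iff.2 ⟨z, hz, hlt⟩)
    have h1 : y ∈ ⋃ x ∈ H, Metric.closedBall x δ := hct ▸ hy.1
    simp only [Set.mem_iUnion, Metric.mem_closedBall] at h1
    obtain ⟨x, hxH, hxd⟩ := h1
    have heq : dist y x = δ := le_antisymm hxd (hfar x hxH)
    rw [Real.dist_eq] at heq
    rcases abs_eq hδ.le |>.1 heq with h' | h'
    · exact ⟨hfar, Or.inl (by rw [show y - δ = x by linarith]; exact hxH)⟩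
    · exact ⟨hfar, Or.inr (by rw [show y + δ = x by linarith]; exact hxH)⟩
  have hcount : D.Countable := by
    have hsub : D ⊆ {y ∈ D | y - δ ∈ H} ∪ {y ∈ D | y + δ ∈ H} := by
      intro y hy
      rcases (key y hy).2 with h' | h'
      · exact Or.inl ⟨hy, h'⟩
      · exact Or.inr ⟨hy, h'⟩
    refine Set.Countable.mono hsub (Set.Countable.union ?_ ?_)
    · refine countable_of_separated (ε := 2 * δ) (by linarith) ?_
      rintro y ⟨hyD, hyH⟩ z ⟨hzD, hzH⟩ hyz
      have h1 : δ ≤ dist y (z - δ) := (key y hyD).1 _ hzH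
      have h2 : δ ≤ dist z (y - δ) := (key z hzD).1 _ hyH
      rw [Real.dist_eq] at h1 h2
      by_contra hlt
      push_neg at hlt
      have ht := abs_lt.1 hlt
      rcases lt_trichotomy (y - z) 0 with h' | h' | h'
      · have : |y - (z - δ)| < δ := abs_lt.2 ⟨by linarith, by linarith⟩
        linarith
      · exact hyz (by linarith)
      · have : |z - (y - δ)| < δ := abs_lt.2 ⟨by linarith, by linarith⟩
        linarith
    · refine countable_of_separated (ε := 2 * δ) (by linarith) ?_
      rintro y ⟨hyD, hyH⟩ z ⟨hzD, hzH⟩ hyz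
      have h1 : δ ≤ dist y (z + δ) := (key y hyD).1 _ hzH
      have h2 : δ ≤ dist z (y + δ) := (key z hzD).1 _ hyH
      rw [Real.dist_eq] at h1 h2
      by_contra hlt
      push_neg at hlt
      have ht := abs_lt.1 hlt
      rcases lt_trichotomy (y - z) 0 with h' | h' | h'
      · have : |z - (y + δ)| < δ := abs_lt.2 ⟨by linarith, by linarith⟩
        linarith
      · exact hyz (by linarith)
      · have : |y - (z + δ)| < δ := abs_lt.2 ⟨by linarith, by linarith⟩
        linarith
  exact measure_mono_null (le_refl D) (Set.Countable.measure_zero hcount _)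

theorem avg_thickening_tendsto_of_antitone (δ : ℝ) (hδ : 0 < δ)
    (Hn : ℕ → Set ℝ) (hne : ∀ n, (Hn n).Nonempty)
    (hcomp : ∀ n, IsCompact (Hn n))
    (hdec : ∀ n, Hn (n + 1) ⊆ Hn n)
    (H : Set ℝ) (hH : H = ⋂ n, Hn n) :
    Tendsto (fun n => avg (Metric.thickening δ (Hn n))) atTop
      (nhds (avg (Metric.thickening δ H))) := by
  subst hH
  set Tn : ℕ → Set ℝ := fun n => Metric.thickening δ (Hn n) with hTn
  set T : Set ℝ := Metric.thickening δ (⋂ n, Hn n) with hT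
  set K : Set ℝ := ⋂ n, Tn n with hK
  have hanti : Antitone Hn := antitone_nat_of_succ_le hdec
  have hTanti : Antitone Tn := fun m n h =>
    Metric.thickening_subset_of_subset δ (hanti h)
  have hTmeas : ∀ n, MeasurableSet (Tn n) := fun n =>
    Metric.isOpen_thickening.measurableSet
  have hKmeas : MeasurableSet K := MeasurableSet.iInter fun n => hTmeas n
  have hTbdd : Bornology.IsBounded (Tn 0) := (hcomp 0).isBounded.thickening
  have hfin : volume (Tn 0) ≠ ⊤ := hTbdd.measure_lt_top.ne
  -- The intersection is compact and nonempty
  have hHcomp : IsCompact (⋂ n, Hn n) :=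
    (hcomp 0).of_isClosed_subset (isClosed_iInter fun n => (hcomp n).isClosed)
      (Set.iInter_subset _ 0)
  have hHne : (⋂ n, Hn n).Nonempty :=
    IsCompact.nonempty_iInter_of_sequence_nonempty_isCompact_isClosed Hn hdec hne
      (hcomp 0) (fun n => (hcomp n).isClosed)
  -- T ⊆ K
  have hTK : T ⊆ K := Set.subset_iInter fun n =>
    Metric.thickening_subset_of_subset δ (Set.iInter_subset _ n)
  -- K ⊆ cthickening δ (⋂ Hn)
  have hKsub : K ⊆ Metric.cthickening δ (⋂ n, Hn n) := by
    intro x hx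
    have hx' : ∀ n, ∃ z ∈ Hn n, dist x z < δ := fun n =>
      Metric.mem_thickening_iff.1 (Set.mem_iInter.1 hx n)
    choose z hz hzd using hx'
    obtain ⟨y, hy0, φ, hφ, hlim⟩ :=
      tendsto_subseq_of_bounded (hcomp 0).isBounded
        (fun n => hanti (Nat.zero_le n) (hz n))
    have hyH : y ∈ ⋂ n, Hn n := by
      refine Set.mem_iInter.2 fun m => ?_
      refine (hcomp m).isClosed.mem_of_tendsto hlim ?_
      filter_upwards [eventually_ge_atTop m] with n hn
      exact hanti (hn.trans (hφ.le_apply)) (hz (φ n))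
    have hdy : dist x y ≤ δ := by
      have : Tendsto (fun n => dist x (z (φ n))) atTop (nhds (dist x y)) :=
        (continuous_const.dist continuous_id).continuousAt.tendsto.comp hlim
      exact le_of_tendsto this (Eventually.of_forall fun n => (hzd (φ n)).le)
    exact Metric.mem_cthickening_of_dist_le x y δ _ hyH hdy
  -- K and T agree up to null sets
  have hKT_null : volume (K \ T) = 0 :=
    measure_mono_null (Set.diff_subset_diff_left hKsub)
      (volume_cthickening_diff_thickening δ hδ _ hHcomp)
  have hKTae : K =ᵐ[volume] T :=
    (MeasureTheory.ae_eq_set).2 ⟨hKT_null, by simp [Set.diff_eq_empty.2 hTK]⟩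
  -- Integrability of the dominating function
  have hIntOn : IntegrableOn id (Tn 0) volume := by
    obtain ⟨R, hR⟩ := hTbdd.subset_closedBall 0
    have h1 : IntegrableOn id (Metric.closedBall (0 : ℝ) R) volume := by
      rw [Real.closedBall_eq_Icc]
      exact continuous_id.continuousOn.integrableOn_Icc
    exact h1.mono_set hR
  -- Numerator convergence
  have hnum : Tendsto (fun n => ∫ x in Tn n, x) atTop (nhds (∫ x in K, x)) := by
    have heq : ∀ n, ∫ x in Tn n, x = ∫ x, (Tn n).indicator id x :=
      fun n => (integral_indicator (hTmeas n)).symm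
    have heqK : ∫ x in K, x = ∫ x, K.indicator id x :=
      (integral_indicator hKmeas).symm
    simp only [heq, heqK]
    refine tendsto_integral_of_dominated_convergence
      ((Tn 0).indicator fun x => |x|) ?_ ?_ ?_ ?_
    · exact fun n => (measurable_id.indicator (hTmeas n)).aestronglyMeasurable
    · rw [integrable_indicator_iff (hTmeas 0)]
      simpa [Real.norm_eq_abs, IntegrableOn] using hIntOn.norm
    · intro n
      refine Eventually.of_forall fun x => ?_
      by_cases hx : x ∈ Tn n
      · have hx0 : x ∈ Tn 0 := hTanti (Nat.zero_le n) hx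
        simp [Set.indicator_of_mem, hx, hx0, Real.norm_eq_abs]
      · simp only [Set.indicator_of_notMem hx, norm_zero]
        exact Set.indicator_apply_nonneg fun _ => abs_nonneg _
    · refine Eventually.of_forall fun x => ?_
      by_cases hx : x ∈ K
      · have : ∀ n, (Tn n).indicator id x = K.indicator id x := fun n => by
          rw [Set.indicator_of_mem (Set.mem_iInter.1 hx n), Set.indicator_of_mem hx]
        simp only [this]
        exact tendsto_const_nhds
      · obtain ⟨m, hm⟩ : ∃ m, x ∉ Tn m := by
          by_contra hcon
          push_neg at hcon
          exact hx (Set.mem_iInter.2 hcon)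
        rw [Set.indicator_of_notMem hx]
        refine tendsto_const_nhds.congr' ?_
        filter_upwards [eventually_ge_atTop m] with n hn
        exact (Set.indicator_of_notMem (fun h => hm (hTanti hn h)) id).symm
  -- Denominator convergence
  have hKfin : volume K ≠ ⊤ :=
    ((measure_mono (Set.iInter_subset _ 0)).trans_lt hTbdd.measure_lt_top).ne
  have hden : Tendsto (fun n => (volume (Tn n)).toReal) atTop
      (nhds ((volume K).toReal)) := by
    have h1 := tendsto_measure_iInter_atTop
      (fun n => (hTmeas n).nullMeasurableSet) hTanti ⟨0, hfin⟩
    exact (ENNReal.tendsto_toReal hKfin).comp h1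
  -- Positivity of the limit denominator
  have hTne : T.Nonempty := hHne.mono (Metric.self_subset_thickening hδ _)
  have hTpos : 0 < volume T := Metric.isOpen_thickening.measure_pos volume hTne
  have hKvol : volume K = volume T := measure_congr hKTae
  have hKint : ∫ x in K, x = ∫ x in T, x := setIntegral_congr_set hKTae
  have hden0 : (volume K).toReal ≠ 0 := by
    rw [hKvol]
    exact (ENNReal.toReal_pos hTpos.ne' (hKvol ▸ hKfin)).ne'
  have := hnum.div hden hden0
  rw [hKint, hKvol] at this
  simpa [avg, Pi.div_def] using this
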